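/- In the algebra F the following five relations hold: y³ = xyx, yxy = x³, y²x³ = xyx²y, yx²yx = x³y², and yx⁴ = x⁴y. -/

import Mathlib

open FreeAlgebra

noncomputable section

/-- The defining relations `x³ = yxy`, `y³ = xyx` of the algebra `F`
(with `x = ι k 0`, `y = ι k 1`). -/
inductive FRel (k : Type*) [CommRing k] :
    FreeAlgebra k (Fin 2) → FreeAlgebra k (Fin 2) → Prop
  | rel1 : FRel k (ι k 0 * ι k 0 * ι k 0) (ι k 1 * ι k 0 * ι k 1)
  | rel2 : FRel k (ι k 1 * ι k 1 * ι k 1) (ι k 0 * ι k 1 * ι k 0)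

/-- The algebra `F = k⟨x,y⟩/(x³ − yxy, y³ − xyx)`. -/
abbrev FAlg (k : Type*) [CommRing k] : Type _ := RingQuot (FRel k)

/-- The generator `x` of `F`. -/
def FAlg.x (k : Type*) [CommRing k] : FAlg k :=
  RingQuot.mkAlgHom k (FRel k) (ι k 0)

/-- The generator `y` of `F`. -/
def FAlg.y (k : Type*) [CommRing k] : FAlg k :=
  RingQuot.mkAlgHom k (FRel k) (ι k 1)

/-- in the algebra `F` the five relations
`y³ = xyx`, `yxy = x³`, `y²x³ = xyx²y`, `yx²yx = x³y²` and `yx⁴ = x⁴y` hold. -/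
theorem FAlg_reduction_system (k : Type*) [Field k] [IsAlgClosed k] [CharZero k] :
    FAlg.y k ^ 3 = FAlg.x k * FAlg.y k * FAlg.x k ∧
    FAlg.y k * FAlg.x k * FAlg.y k = FAlg.x k ^ 3 ∧
    FAlg.y k ^ 2 * FAlg.x k ^ 3 = FAlg.x k * FAlg.y k * FAlg.x k ^ 2 * FAlg.y k ∧
    FAlg.y k * FAlg.x k ^ 2 * FAlg.y k * FAlg.x k = FAlg.x k ^ 3 * FAlg.y k ^ 2 ∧
    FAlg.y k * FAlg.x k ^ 4 = FAlg.x k ^ 4 * FAlg.y k := by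
  have hx : FAlg.x k * FAlg.x k * FAlg.x k = FAlg.y k * FAlg.x k * FAlg.y k := by
    simpa only [map_mul, FAlg.x, FAlg.y] using RingQuot.mkAlgHom_rel k (FRel.rel1 (k := k))
  have hy : FAlg.y k * FAlg.y k * FAlg.y k = FAlg.x k * FAlg.y k * FAlg.x k := by
    simpa only [map_mul, FAlg.x, FAlg.y] using RingQuot.mkAlgHom_rel k (FRel.rel2 (k := k))
  set X := FAlg.x k with hX
  set Y := FAlg.y k with hY
  refine ⟨?_, ?_, ?_, ?_, ?_⟩
  · calc Y ^ 3 = Y * Y * Y := by noncomm_ring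
    _ = X * Y * X := hy
  · calc Y * X * Y = X * X * X := hx.symm
    _ = X ^ 3 := by noncomm_ring
  · calc Y ^ 2 * X ^ 3 = Y * Y * (X * X * X) := by noncomm_ring
    _ = Y * Y * (Y * X * Y) := by rw [hx]
    _ = Y * Y * Y * (X * Y) := by noncomm_ring
    _ = X * Y * X * (X * Y) := by rw [hy]
    _ = X * Y * X ^ 2 * Y := by noncomm_ring
  · calc Y * X ^ 2 * Y * X = Y * X * (X * Y * X) := by noncomm_ring
    _ = Y * X * (Y * Y * Y) := by rw [hy]
    _ = Y * X * Y * (Y * Y) := by noncomm_ring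
    _ = X * X * X * (Y * Y) := by rw [hx]
    _ = X ^ 3 * Y ^ 2 := by noncomm_ring
  · calc Y * X ^ 4 = Y * (X * X * X) * X := by noncomm_ring
    _ = Y * (Y * X * Y) * X := by rw [hx]
    _ = Y * Y * (X * Y * X) := by noncomm_ring
    _ = Y * Y * (Y * Y * Y) := by rw [hy]
    _ = Y * (Y * Y * Y) * Y := by noncomm_ring
    _ = Y * (X * Y * X) * Y := by rw [hy]
    _ = Y * X * Y * (X * Y) := by noncomm_ring
    _ = X * X * X * (X * Y) := by rw [hx]
    _ = X ^ 4 * Y := by noncomm_ring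

end
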